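/- The Jaccard distance satisfies the triangle inequality: for all finite sets A, B, C, J(A,C) ≤ J(A,B) + J(B,C). -/
import Mathlib

noncomputable def jaccard {α : Type*} [DecidableEq α] (A B : Finset α) : ℝ :=
  if A ∪ B = ∅ then 0 else 1 - ((A ∩ B).card : ℝ) / ((A ∪ B).card : ℝ)

private lemma card_symmDiff_add {α : Type*} [DecidableEq α] (A B : Finset α) :
    (symmDiff A B).card + (A ∩ B).card = (A ∪ B).card := by
  have h : symmDiff A B = (A ∪ B) \ (A ∩ B) := symmDiff_eq_sup_sdiff_inf A B
  rw [h, Finset.card_sdiff_of_subset Finset.inter_subset_union]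
  have := Finset.card_le_card (Finset.inter_subset_union (s := A) (t := B))
  omega

private lemma two_card_union {α : Type*} [DecidableEq α] (A B : Finset α) :
    2 * (A ∪ B).card = A.card + B.card + (symmDiff A B).card := by
  have h1 := card_symmDiff_add A B
  have h2 := Finset.card_union_add_card_inter A B
  omega

private lemma card_symmDiff_triangle {α : Type*} [DecidableEq α] (A B C : Finset α) :
    (symmDiff A C).card ≤ (symmDiff A B).card + (symmDiff B C).card := by
  have h : symmDiff A C ⊆ symmDiff A B ∪ symmDiff B C := symmDiff_triangle A B C
  calc (symmDiff A C).card ≤ (symmDiff A B ∪ symmDiff B C).card := Finset.card_le_card h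
    _ ≤ _ := Finset.card_union_le _ _

private lemma card_le_symmDiff {α : Type*} [DecidableEq α] (B C : Finset α) :
    B.card ≤ C.card + (symmDiff B C).card := by
  have h : B ⊆ C ∪ symmDiff B C := by
    intro x hx
    simp only [Finset.mem_union, Finset.mem_symmDiff]
    by_cases hc : x ∈ C
    · exact Or.inl hc
    · exact Or.inr (Or.inl ⟨hx, hc⟩)
  calc B.card ≤ (C ∪ symmDiff B C).card := Finset.card_le_card h
    _ ≤ _ := Finset.card_union_le _ _

private lemma jaccard_eq {α : Type*} [DecidableEq α] (A B : Finset α) (h : A ∪ B ≠ ∅) :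
    jaccard A B = 2 * ((symmDiff A B).card : ℝ) /
      ((A.card : ℝ) + (B.card : ℝ) + ((symmDiff A B).card : ℝ)) := by
  have hu : 0 < ((A ∪ B).card : ℝ) := by
    exact_mod_cast Finset.card_pos.mpr (Finset.nonempty_iff_ne_empty.mpr h)
  have h1 : ((symmDiff A B).card : ℝ) + ((A ∩ B).card : ℝ) = ((A ∪ B).card : ℝ) := by
    exact_mod_cast card_symmDiff_add A B
  have h2 : 2 * ((A ∪ B).card : ℝ) =
      (A.card : ℝ) + (B.card : ℝ) + ((symmDiff A B).card : ℝ) := by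
    exact_mod_cast two_card_union A B
  rw [jaccard, if_neg h, ← h2, mul_div_mul_left _ _ (two_ne_zero)]
  field_simp
  linarith

private lemma jaccard_nonneg {α : Type*} [DecidableEq α] (A B : Finset α) :
    0 ≤ jaccard A B := by
  rw [jaccard]
  split
  · exact le_rfl
  · rename_i h
    have hu : 0 < ((A ∪ B).card : ℝ) := by
      exact_mod_cast Finset.card_pos.mpr (Finset.nonempty_iff_ne_empty.mpr h)
    have hle : ((A ∩ B).card : ℝ) ≤ ((A ∪ B).card : ℝ) := by
      exact_mod_cast Finset.card_le_card (Finset.inter_subset_union (s := A) (t := B))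
    have : ((A ∩ B).card : ℝ) / ((A ∪ B).card : ℝ) ≤ 1 := by
      rw [div_le_one hu]; exact hle
    linarith

private lemma real_triangle (a b c d12 d23 d13 : ℝ)
    (ha : 0 ≤ a) (hc : 0 ≤ c) (h12 : 0 ≤ d12) (h23 : 0 ≤ d23) (h13 : 0 ≤ d13)
    (htri : d13 ≤ d12 + d23) (hb1 : b ≤ a + d12) (hb2 : b ≤ c + d23)
    (p1 : 0 < a + b + d12) (p2 : 0 < b + c + d23) (p3 : 0 < a + c + d13) :
    2 * d13 / (a + c + d13) ≤ 2 * d12 / (a + b + d12) + 2 * d23 / (b + c + d23) := by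
  set D := a + c + d12 + d23 with hD
  have pD : 0 < D := by nlinarith
  have step1 : 2 * d13 / (a + c + d13) ≤ 2 * (d12 + d23) / D := by
    rw [div_le_div_iff₀ p3 pD]
    nlinarith [mul_nonneg (add_nonneg ha hc) (by linarith : (0:ℝ) ≤ d12 + d23 - d13)]
  have e1 : 2 * (d12 + d23) / D = 2 * d12 / D + 2 * d23 / D := by ring
  have s2 : 2 * d12 / D ≤ 2 * d12 / (a + b + d12) := by
    apply div_le_div_of_nonneg_left (by linarith) p1 (by linarith)
  have s3 : 2 * d23 / D ≤ 2 * d23 / (b + c + d23) := by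
    apply div_le_div_of_nonneg_left (by linarith) p2 (by linarith)
  linarith

theorem jaccard_triangle {α : Type*} [DecidableEq α] (A B C : Finset α) :
    jaccard A C ≤ jaccard A B + jaccard B C := by
  by_cases hAC : A ∪ C = ∅
  · rw [jaccard, if_pos hAC]
    exact add_nonneg (jaccard_nonneg A B) (jaccard_nonneg B C)
  by_cases hAB : A ∪ B = ∅
  · obtain ⟨hA, hB⟩ := Finset.union_eq_empty.mp hAB
    subst hA; subst hB
    simp [jaccard]
  by_cases hBC : B ∪ C = ∅
  · obtain ⟨hB, hC⟩ := Finset.union_eq_empty.mp hBC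
    subst hB; subst hC
    simp [jaccard]
  rw [jaccard_eq A C hAC, jaccard_eq A B hAB, jaccard_eq B C hBC]
  have pAB : 0 < ((A ∪ B).card : ℝ) := by
    exact_mod_cast Finset.card_pos.mpr (Finset.nonempty_iff_ne_empty.mpr hAB)
  have pBC : 0 < ((B ∪ C).card : ℝ) := by
    exact_mod_cast Finset.card_pos.mpr (Finset.nonempty_iff_ne_empty.mpr hBC)
  have pAC : 0 < ((A ∪ C).card : ℝ) := by
    exact_mod_cast Finset.card_pos.mpr (Finset.nonempty_iff_ne_empty.mpr hAC)
  have eAB : 2 * (((A ∪ B).card : ℕ) : ℝ) =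
      (A.card : ℝ) + (B.card : ℝ) + ((symmDiff A B).card : ℝ) := by
    exact_mod_cast two_card_union A B
  have eBC : 2 * (((B ∪ C).card : ℕ) : ℝ) =
      (B.card : ℝ) + (C.card : ℝ) + ((symmDiff B C).card : ℝ) := by
    exact_mod_cast two_card_union B C
  have eAC : 2 * (((A ∪ C).card : ℕ) : ℝ) =
      (A.card : ℝ) + (C.card : ℝ) + ((symmDiff A C).card : ℝ) := by
    exact_mod_cast two_card_union A C
  have htri : ((symmDiff A C).card : ℝ) ≤
      ((symmDiff A B).card : ℝ) + ((symmDiff B C).card : ℝ) := by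
    exact_mod_cast card_symmDiff_triangle A B C
  have hb1 : (B.card : ℝ) ≤ (A.card : ℝ) + ((symmDiff A B).card : ℝ) := by
    have := card_le_symmDiff B A
    have hsym : symmDiff B A = symmDiff A B := symmDiff_comm B A
    rw [hsym] at this
    exact_mod_cast this
  have hb2 : (B.card : ℝ) ≤ (C.card : ℝ) + ((symmDiff B C).card : ℝ) := by
    exact_mod_cast card_le_symmDiff B C
  exact real_triangle _ _ _ _ _ _
    (by positivity) (by positivity) (by positivity) (by positivity) (by positivity)
    htri hb1 hb2 (by linarith) (by linarith) (by linarith)
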